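/- arXiv:2102.12512 — 2 statements merged into one kernel-verified Lean document; each statement's English description precedes it below -/
import Mathlib

section
/- For density matrices ρ₀, ρ₁ and any prior q ∈ [0,1], the minimum error probability satisfies p_err(q,ρ₀,ρ₁) ≤ Q_min(ρ₀,ρ₁)/2, where p_err(q,ρ₀,ρ₁) = min_{0≤Λ≤I} ( q Tr(Λρ₀) + (1−q) Tr((I−Λ)ρ₁) ) and Q_min(ρ₀,ρ₁) = 2·min{ Tr(Λρ₀) : 0 ≤ Λ ≤ I, Tr(Λ(ρ₀+ρ₁)) = 1 }. -/
open Matrix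
open scoped ComplexOrder

/-- `Q_min(ρ₀,ρ₁) = 2·min{ Tr(Λρ₀) : 0 ≤ Λ ≤ I, Tr(Λ(ρ₀+ρ₁)) = 1 }`. -/
noncomputable def Qmin {d : ℕ} (ρ₀ ρ₁ : Matrix (Fin d) (Fin d) ℂ) : ℝ :=
  sInf {x : ℝ | ∃ Λ : Matrix (Fin d) (Fin d) ℂ, Λ.PosSemidef ∧ (1 - Λ).PosSemidef ∧
    (Λ * (ρ₀ + ρ₁)).trace = 1 ∧ x = 2 * ((Λ * ρ₀).trace).re}

/-- Minimum error probability of binary discrimination with prior `(q, 1−q)`: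
`p_err(q,ρ₀,ρ₁) = min_{0≤Λ≤I} ( q Tr(Λρ₀) + (1−q) Tr((I−Λ)ρ₁) )`. -/
noncomputable def perr {d : ℕ} (q : ℝ) (ρ₀ ρ₁ : Matrix (Fin d) (Fin d) ℂ) : ℝ :=
  sInf {x : ℝ | ∃ Λ : Matrix (Fin d) (Fin d) ℂ, Λ.PosSemidef ∧ (1 - Λ).PosSemidef ∧
    x = q * ((Λ * ρ₀).trace).re + (1 - q) * (((1 - Λ) * ρ₁).trace).re}

lemma psd_trace_nonneg {d : ℕ} {A : Matrix (Fin d) (Fin d) ℂ} (hA : A.PosSemidef) :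
    0 ≤ A.trace := by
  rw [Matrix.trace]
  apply Finset.sum_nonneg
  intro i _
  have := hA.dotProduct_mulVec_nonneg (Pi.single i 1)
  simpa [dotProduct, Matrix.mulVec, Pi.single_apply, Matrix.diag] using this

lemma psd_mul_trace_nonneg {d : ℕ} {A B : Matrix (Fin d) (Fin d) ℂ}
    (hA : A.PosSemidef) (hB : B.PosSemidef) : 0 ≤ ((A * B).trace).re := by
  obtain ⟨S, hSS, hS⟩ : ∃ S, S * S = B ∧ S.PosSemidef :=
    by open scoped MatrixOrder in exact ⟨CFC.sqrt B, CFC.sqrt_mul_sqrt_self B hB.nonneg, (CFC.sqrt_nonneg B).posSemidef⟩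
  have h : (A * B).trace = (S * A * S).trace := by
    rw [← hSS, ← Matrix.mul_assoc, Matrix.trace_mul_cycle]
  have hpsd : (S * A * S).PosSemidef := by
    have := hA.conjTranspose_mul_mul_same S
    rwa [hS.1] at this
  have := psd_trace_nonneg hpsd
  rw [h]
  exact (Complex.le_def.mp this).1

lemma half_one_psd {d : ℕ} :
    Matrix.PosSemidef ((2 : ℂ)⁻¹ • (1 : Matrix (Fin d) (Fin d) ℂ)) := by
  refine Matrix.PosSemidef.of_dotProduct_mulVec_nonneg ?_ ?_
  · unfold Matrix.IsHermitian
    rw [Matrix.conjTranspose_smul]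
    simp
  · intro x
    have h1 : (0 : ℂ) ≤ (2 : ℂ)⁻¹ := by
      rw [Complex.le_def]; norm_num
    have h2 := dotProduct_star_self_nonneg x
    calc (0 : ℂ) ≤ (2 : ℂ)⁻¹ * (dotProduct (star x) x) := mul_nonneg h1 h2
      _ = dotProduct (star x) (((2 : ℂ)⁻¹ • (1 : Matrix (Fin d) (Fin d) ℂ)) *ᵥ x) := by
        simp [Matrix.smul_mulVec, dotProduct_smul]

/-- For every prior `q ∈ [0,1]`, `p_err(q,ρ₀,ρ₁) ≤ Q_min(ρ₀,ρ₁)/2`. -/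
theorem perr_le_Qmin_half {d : ℕ} (ρ₀ ρ₁ : Matrix (Fin d) (Fin d) ℂ)
    (h₀ : ρ₀.PosSemidef) (h₀t : ρ₀.trace = 1)
    (h₁ : ρ₁.PosSemidef) (h₁t : ρ₁.trace = 1)
    (q : ℝ) (hq0 : 0 ≤ q) (hq1 : q ≤ 1) :
    perr q ρ₀ ρ₁ ≤ Qmin ρ₀ ρ₁ / 2 := by
  rw [le_div_iff₀ (by norm_num : (0:ℝ) < 2)]
  -- the Qmin feasible set is nonempty: take Λ = (1/2)•I
  have hhalf : (1 : Matrix (Fin d) (Fin d) ℂ) - (2 : ℂ)⁻¹ • 1 = (2 : ℂ)⁻¹ • 1 := by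
    ext i j
    by_cases h : i = j <;> simp [Matrix.one_apply, h] <;> norm_num
  have hne : Set.Nonempty {x : ℝ | ∃ Λ : Matrix (Fin d) (Fin d) ℂ, Λ.PosSemidef ∧
      (1 - Λ).PosSemidef ∧ (Λ * (ρ₀ + ρ₁)).trace = 1 ∧ x = 2 * ((Λ * ρ₀).trace).re} := by
    refine ⟨2 * ((((2:ℂ)⁻¹ • 1) * ρ₀).trace).re, (2:ℂ)⁻¹ • 1, half_one_psd, ?_, ?_, rfl⟩
    · rw [hhalf]; exact half_one_psd
    · rw [Matrix.smul_mul, Matrix.one_mul, Matrix.trace_smul, Matrix.trace_add, h₀t, h₁t]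
      norm_num
  rw [Qmin]
  apply le_csInf hne
  rintro x ⟨Λ, hΛ, hΛ', hc, rfl⟩
  -- key: Tr((1-Λ)ρ₁) = Tr(Λρ₀)
  have hkey : ((1 - Λ) * ρ₁).trace = (Λ * ρ₀).trace := by
    have h1 : ((1 - Λ) * ρ₁).trace = 1 - (Λ * ρ₁).trace := by
      rw [Matrix.sub_mul, Matrix.one_mul, Matrix.trace_sub, h₁t]
    have h2 : (Λ * ρ₀).trace + (Λ * ρ₁).trace = 1 := by
      rw [← Matrix.trace_add, ← Matrix.mul_add]; exact hc
    rw [h1]; linear_combination -h2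
  -- perr ≤ Tr(Λρ₀).re via the measurement Λ
  have hmem : q * ((Λ * ρ₀).trace).re + (1 - q) * (((1 - Λ) * ρ₁).trace).re ∈
      {x : ℝ | ∃ Λ : Matrix (Fin d) (Fin d) ℂ, Λ.PosSemidef ∧ (1 - Λ).PosSemidef ∧
        x = q * ((Λ * ρ₀).trace).re + (1 - q) * (((1 - Λ) * ρ₁).trace).re} :=
    ⟨Λ, hΛ, hΛ', rfl⟩
  have hbdd : BddBelow {x : ℝ | ∃ Λ : Matrix (Fin d) (Fin d) ℂ, Λ.PosSemidef ∧
      (1 - Λ).PosSemidef ∧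
      x = q * ((Λ * ρ₀).trace).re + (1 - q) * (((1 - Λ) * ρ₁).trace).re} := by
    refine ⟨0, ?_⟩
    rintro y ⟨M, hM, hM', rfl⟩
    have t0 := psd_mul_trace_nonneg hM h₀
    have t1 := psd_mul_trace_nonneg hM' h₁
    have : (0:ℝ) ≤ 1 - q := by linarith
    positivity
  have hle : perr q ρ₀ ρ₁ ≤
      q * ((Λ * ρ₀).trace).re + (1 - q) * (((1 - Λ) * ρ₁).trace).re :=
    csInf_le hbdd hmem
  have heq : q * ((Λ * ρ₀).trace).re + (1 - q) * (((1 - Λ) * ρ₁).trace).re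
      = ((Λ * ρ₀).trace).re := by
    rw [hkey]; ring
  rw [heq] at hle
  linarith
end

section
/- Monotonicity of minimum error probability under CDS maps: let ρ_XA = p|0⟩⟨0|⊗ρ₀ + (1−p)|1⟩⟨1|⊗ρ₁ be a classical–quantum state and let N = id_X ⊗ E₀ + F_X ⊗ E₁ be a conditional doubly stochastic map, where E₀, E₁ are completely positive maps with E₀ + E₁ trace-preserving and F_X the flip channel swapping |0⟩⟨0| and |1⟩⟨1|. Then p_err(N(ρ_XA)) ≥ p_err(ρ_XA), where p_err is the Helstrom minimum error probability of the corresponding binary discrimination problem. -/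
open Matrix
open scoped ComplexOrder

/-- Minimum error probability of the binary discrimination problem associated with a
c-q state whose (unnormalized) blocks are `A = ⟨0|_X τ |0⟩_X` and `B = ⟨1|_X τ |1⟩_X`:
`p_err = min_{0≤Λ≤I}( Tr(ΛA) + Tr((I−Λ)B) )`. -/
noncomputable def perrBlocks {d : ℕ} (A B : Matrix (Fin d) (Fin d) ℂ) : ℝ :=
  sInf {x : ℝ | ∃ Λ : Matrix (Fin d) (Fin d) ℂ, Λ.PosSemidef ∧ (1 - Λ).PosSemidef ∧
    x = ((Λ * A).trace).re + (((1 - Λ) * B).trace).re}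

private lemma psd_sum {ι : Type} [Fintype ι] {n : ℕ} (f : ι → Matrix (Fin n) (Fin n) ℂ)
    (h : ∀ i, (f i).PosSemidef) : (∑ i, f i).PosSemidef := by
  classical
  exact Finset.sum_induction f _ (fun a b ha hb => ha.add hb) Matrix.PosSemidef.zero
    (fun i _ => h i)

private lemma psd_smul {n : ℕ} {M : Matrix (Fin n) (Fin n) ℂ} (hM : M.PosSemidef)
    {r : ℝ} (hr : 0 ≤ r) : (r • M).PosSemidef := by
  constructor
  · unfold Matrix.IsHermitian
    rw [Matrix.conjTranspose_smul, hM.isHermitian.eq]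
    congr 1
  · intro x
    have h := hM.2 x
    exact (hM.smul hr).2 x

private lemma trace_re_nonneg {n : ℕ} {M : Matrix (Fin n) (Fin n) ℂ} (hM : M.PosSemidef) :
    0 ≤ M.trace.re := by
  have h : ∀ i, 0 ≤ (M i i).re := by
    intro i
    have := hM.re_dotProduct_nonneg (Pi.single i 1)
    simpa [dotProduct, Matrix.mulVec, Pi.single_apply] using this
  rw [Matrix.trace]
  simp only [Matrix.diag, Complex.re_sum]
  exact Finset.sum_nonneg fun i _ => h i

open scoped MatrixOrder in
private lemma trace_mul_re_nonneg {n : ℕ} {Λ A : Matrix (Fin n) (Fin n) ℂ}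
    (hΛ : Λ.PosSemidef) (hA : A.PosSemidef) : 0 ≤ ((Λ * A).trace).re := by
  have h2 : (Λ * A).trace = (CFC.sqrt Λ * A * CFC.sqrt Λ).trace := by
    conv_lhs => rw [← CFC.sqrt_mul_sqrt_self Λ hΛ.nonneg]
    rw [Matrix.mul_assoc, Matrix.trace_mul_comm, Matrix.mul_assoc]
  rw [h2]
  have h3 : (CFC.sqrt Λ * A * CFC.sqrt Λ).PosSemidef := by
    have := hA.conjTranspose_mul_mul_same (CFC.sqrt Λ)
    rwa [(CFC.sqrt_nonneg Λ).posSemidef.isHermitian.eq] at this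
  exact trace_re_nonneg h3

private lemma tr_swap {d m : ℕ} {ι : Type} [Fintype ι] (Λ : Matrix (Fin m) (Fin m) ℂ)
    (K : ι → Matrix (Fin m) (Fin d) ℂ) (ρ : Matrix (Fin d) (Fin d) ℂ) :
    ((∑ i, (K i)ᴴ * Λ * (K i)) * ρ).trace = (Λ * ∑ i, K i * ρ * (K i)ᴴ).trace := by
  rw [Finset.sum_mul, Matrix.mul_sum, Matrix.trace_sum, Matrix.trace_sum]
  refine Finset.sum_congr rfl fun i _ => ?_
  rw [Matrix.mul_assoc ((K i)ᴴ * Λ) (K i) ρ, Matrix.trace_mul_comm,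
    Matrix.trace_mul_comm Λ, ← Matrix.mul_assoc]

/-- Monotonicity of the minimum error probability under CDS maps
`N = id_X ⊗ E₀ + F_X ⊗ E₁`, where `E₀, E₁` are completely positive (given in Kraus form)
and `E₀ + E₁` is trace preserving: applied to `ρ_XA = p|0⟩⟨0|⊗ρ₀ + (1−p)|1⟩⟨1|⊗ρ₁`,
whose image has blocks `pE₀(ρ₀) + (1−p)E₁(ρ₁)` and `pE₁(ρ₀) + (1−p)E₀(ρ₁)`,
one has `p_err(N(ρ_XA)) ≥ p_err(ρ_XA)`. -/
theorem perr_mono_CDS {d m : ℕ} (p : ℝ) (hp0 : 0 ≤ p) (hp1 : p ≤ 1)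
    (ρ₀ ρ₁ : Matrix (Fin d) (Fin d) ℂ)
    (h₀ : ρ₀.PosSemidef) (h₀t : ρ₀.trace = 1)
    (h₁ : ρ₁.PosSemidef) (h₁t : ρ₁.trace = 1)
    {ι₀ ι₁ : Type} [Fintype ι₀] [Fintype ι₁]
    (K₀ : ι₀ → Matrix (Fin m) (Fin d) ℂ) (K₁ : ι₁ → Matrix (Fin m) (Fin d) ℂ)
    (hTP : (∑ i, (K₀ i)ᴴ * K₀ i) + (∑ i, (K₁ i)ᴴ * K₁ i) = 1) :
    perrBlocks (p • ρ₀) ((1 - p) • ρ₁) ≤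
      perrBlocks
        (p • (∑ i, K₀ i * ρ₀ * (K₀ i)ᴴ) + (1 - p) • (∑ i, K₁ i * ρ₁ * (K₁ i)ᴴ))
        (p • (∑ i, K₁ i * ρ₀ * (K₁ i)ᴴ) + (1 - p) • (∑ i, K₀ i * ρ₁ * (K₀ i)ᴴ)) := by
  classical
  have hρ₀ : (p • ρ₀).PosSemidef := psd_smul h₀ hp0
  have hρ₁ : ((1 - p) • ρ₁).PosSemidef := psd_smul h₁ (by linarith)
  have hbdd : BddBelow {x : ℝ | ∃ Λ : Matrix (Fin d) (Fin d) ℂ, Λ.PosSemidef ∧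
      (1 - Λ).PosSemidef ∧
      x = ((Λ * (p • ρ₀)).trace).re + (((1 - Λ) * ((1 - p) • ρ₁)).trace).re} := by
    refine ⟨0, ?_⟩
    rintro x ⟨Λ, hΛ, hΛ', rfl⟩
    have := trace_mul_re_nonneg hΛ hρ₀
    have := trace_mul_re_nonneg hΛ' hρ₁
    linarith
  rw [perrBlocks, perrBlocks]
  apply le_csInf
  · exact ⟨_, 0, Matrix.PosSemidef.zero, by simpa using Matrix.PosSemidef.one, rfl⟩
  · rintro b ⟨Λ, hΛ, hΛ', rfl⟩
    set M : Matrix (Fin d) (Fin d) ℂ :=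
      (∑ i, (K₀ i)ᴴ * Λ * K₀ i) + (∑ i, (K₁ i)ᴴ * (1 - Λ) * K₁ i) with hMdef
    have hM : M.PosSemidef :=
      (psd_sum _ fun i => hΛ.conjTranspose_mul_mul_same (K₀ i)).add
        (psd_sum _ fun i => hΛ'.conjTranspose_mul_mul_same (K₁ i))
    have h1M : (1 : Matrix (Fin d) (Fin d) ℂ) - M =
        (∑ i, (K₀ i)ᴴ * (1 - Λ) * K₀ i) + (∑ i, (K₁ i)ᴴ * Λ * K₁ i) := by
      have hsum : M + ((∑ i, (K₀ i)ᴴ * (1 - Λ) * K₀ i) + (∑ i, (K₁ i)ᴴ * Λ * K₁ i))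
          = 1 := by
        rw [← hTP, hMdef]
        rw [show ∀ (A B C D : Matrix (Fin d) (Fin d) ℂ), A + B + (C + D) = (A + C) + (B + D)
          from fun A B C D => by abel]
        congr 1
        · rw [← Finset.sum_add_distrib]
          refine Finset.sum_congr rfl fun i _ => ?_
          rw [← Matrix.add_mul, ← Matrix.mul_add,
            show Λ + (1 - Λ) = (1 : Matrix (Fin m) (Fin m) ℂ) from by abel, Matrix.mul_one]
        · rw [← Finset.sum_add_distrib]
          refine Finset.sum_congr rfl fun i _ => ?_
          rw [← Matrix.add_mul, ← Matrix.mul_add,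
            show (1 - Λ) + Λ = (1 : Matrix (Fin m) (Fin m) ℂ) from by abel, Matrix.mul_one]
      rw [sub_eq_iff_eq_add, ← hsum]
      abel
    have h1Mpsd : ((1 : Matrix (Fin d) (Fin d) ℂ) - M).PosSemidef := by
      rw [h1M]
      exact (psd_sum _ fun i => hΛ'.conjTranspose_mul_mul_same (K₀ i)).add
        (psd_sum _ fun i => hΛ.conjTranspose_mul_mul_same (K₁ i))
    have key : (M * (p • ρ₀)).trace + ((1 - M) * ((1 - p) • ρ₁)).trace
        = (Λ * (p • (∑ i, K₀ i * ρ₀ * (K₀ i)ᴴ) + (1 - p) • (∑ i, K₁ i * ρ₁ * (K₁ i)ᴴ))).trace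
        + ((1 - Λ) *
            (p • (∑ i, K₁ i * ρ₀ * (K₁ i)ᴴ) + (1 - p) • (∑ i, K₀ i * ρ₁ * (K₀ i)ᴴ))).trace := by
      rw [h1M, hMdef]
      simp only [Matrix.mul_smul, Matrix.mul_add, Matrix.add_mul, Matrix.trace_add,
        Matrix.trace_smul]
      rw [tr_swap Λ K₀ ρ₀, tr_swap (1 - Λ) K₁ ρ₀, tr_swap (1 - Λ) K₀ ρ₁, tr_swap Λ K₁ ρ₁]
      module
    refine csInf_le hbdd ⟨M, hM, h1Mpsd, ?_⟩
    have := congrArg Complex.re key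
    simpa [Complex.add_re] using this.symm
end
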